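/- Let n ≥ 1, let f : (0,∞) → (0,∞) be differentiable with f'(x) > 0 and f'(x) ≤ f(x)/x for all x > 0. Fix r > 0, a vector g ∈ ℝ^n with g_l > 0, nonnegative off-diagonal gains g_j ≥ 0 (j ≠ l), and σ > 0. Define SINR(p) = g_l·p_l/(Σ_{j≠l} g_j·p_j + σ) and I(p) = r·p_l/f(SINR(p)). Then for every α > 1 and p > 0 componentwise, I(αp) < α·I(p). -/

import Mathlib

open Finset

/-- Scalability (Lemma 2): for a positive rate function f with f' > 0 and
f'(x) ≤ f(x)/x, the interference map I(p) = r·p_l/f(SINR(p)) satisfies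
I(αp) < α·I(p) for all α > 1 and p > 0. -/
theorem general_interference_scalable {n : ℕ} (hn : 1 ≤ n) (l : Fin n)
    (f : ℝ → ℝ) (hf : ∀ x : ℝ, 0 < x → 0 < f x)
    (hdiff : ∀ x : ℝ, 0 < x → DifferentiableAt ℝ f x)
    (hderiv_pos : ∀ x : ℝ, 0 < x → 0 < deriv f x)
    (hderiv_le : ∀ x : ℝ, 0 < x → deriv f x ≤ f x / x)
    (r : ℝ) (hr : 0 < r) (g : Fin n → ℝ) (hgl : 0 < g l)
    (hg : ∀ j, j ≠ l → 0 ≤ g j) (σ : ℝ) (hσ : 0 < σ) :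
    let SINR : (Fin n → ℝ) → ℝ :=
      fun p => g l * p l / (∑ j ∈ univ.erase l, g j * p j + σ)
    let I : (Fin n → ℝ) → ℝ := fun p => r * p l / f (SINR p)
    ∀ α : ℝ, 1 < α → ∀ p : Fin n → ℝ, (∀ i, 0 < p i) →
      I (α • p) < α * I p := by
  intro SINR I α hα p hp
  have hα0 : (0:ℝ) < α := lt_trans one_pos hα
  set D := ∑ j ∈ univ.erase l, g j * p j with hD
  have hD0 : 0 ≤ D := Finset.sum_nonneg fun j hj =>
    mul_nonneg (hg j (Finset.ne_of_mem_erase hj)) (hp j).le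
  have hden1 : 0 < D + σ := by linarith
  have hden2 : 0 < α * D + σ := by nlinarith
  have ha : 0 < g l * p l := mul_pos hgl (hp l)
  have hsum : ∑ j ∈ univ.erase l, g j * (α • p) j = α * D := by
    rw [hD, Finset.mul_sum]
    exact Finset.sum_congr rfl fun j _ => by
      simp [Pi.smul_apply, smul_eq_mul]; ring
  have hS1 : SINR p = g l * p l / (D + σ) := rfl
  have hS2 : SINR (α • p) = α * (g l * p l) / (α * D + σ) := by
    show g l * (α • p) l / (∑ j ∈ univ.erase l, g j * (α • p) j + σ) = _
    rw [hsum]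
    simp only [Pi.smul_apply, smul_eq_mul]
    ring
  have hS1pos : 0 < SINR p := by rw [hS1]; positivity
  have hS2pos : 0 < SINR (α • p) := by rw [hS2]; positivity
  have hlt : SINR p < SINR (α • p) := by
    rw [hS1, hS2, div_lt_div_iff₀ hden1 hden2]
    nlinarith [mul_pos (mul_pos (sub_pos.mpr hα) hσ) ha]
  have hmono : StrictMonoOn f (Set.Ioi (0:ℝ)) := by
    apply strictMonoOn_of_deriv_pos (convex_Ioi 0)
    · exact fun x hx => ((hdiff x hx).continuousAt).continuousWithinAt
    · intro x hx
      rw [interior_Ioi] at hx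
      exact hderiv_pos x hx
  have hflt : f (SINR p) < f (SINR (α • p)) := hmono hS1pos hS2pos hlt
  have hf1 : 0 < f (SINR p) := hf _ hS1pos
  have key : r * (α * p l) / f (SINR (α • p)) < r * (α * p l) / f (SINR p) :=
    div_lt_div_of_pos_left (mul_pos hr (mul_pos hα0 (hp l))) hf1 hflt
  calc I (α • p) = r * (α * p l) / f (SINR (α • p)) := by
        simp [I, Pi.smul_apply, smul_eq_mul]
    _ < r * (α * p l) / f (SINR p) := key
    _ = α * I p := by simp only [I]; ring
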